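/- If D is a compact subset of ℝ which is a time scale, fₙ : D → ℝ are rd-continuous for each n ∈ ℕ, and {fₙ} converges uniformly to f on D, then f is rd-continuous and for a, b ∈ D, the delta integral of f over [a,b] equals the limit of the delta integrals of fₙ over [a,b]. -/

import Mathlib

open MeasureTheory Filter

/-- `f` is rd-continuous on `s ∩ T`: continuous (within `T`) at right-dense points,
and finite left-sided limits at left-dense points. -/
def RdContinuousOn (T : Set ℝ) (f : ℝ → ℝ) (s : Set ℝ) : Prop :=
  (∀ t ∈ s ∩ T, t ∈ closure (T ∩ Set.Ioi t) → ContinuousWithinAt f T t) ∧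
  (∀ t ∈ s ∩ T, t ∈ closure (T ∩ Set.Iio t) →
    ∃ L : ℝ, Tendsto f (nhdsWithin t (T ∩ Set.Iio t)) (nhds L))

/-- The delta (time-scale, Cauchy) integral of `f` over `[a,b] ∩ T`. -/
noncomputable def deltaInt (T : Set ℝ) (a b : ℝ) (f : ℝ → ℝ) : ℝ :=
  ∫ t in a..b, f (sSup (T ∩ Set.Iic t))

open Set Topology

/-- An rd-continuous function on a compact time scale is bounded. -/
lemma rd_bounded {D : Set ℝ} (hDcp : IsCompact D) {φ : ℝ → ℝ}
    (hφ : RdContinuousOn D φ D) :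
    ∃ M : ℝ, ∀ x ∈ D, |φ x| ≤ M := by
  have claim : ∀ t ∈ D, ∃ V : Set ℝ, V ∈ 𝓝 t ∧ ∃ M, ∀ x ∈ V ∩ D, |φ x| ≤ M := by
    intro t ht
    by_cases hrd : t ∈ closure (D ∩ Set.Ioi t)
    · have h := hφ.1 t ⟨ht, ht⟩ hrd
      have h2 : φ ⁻¹' Metric.ball (φ t) 1 ∈ 𝓝[D] t := h (Metric.ball_mem_nhds _ one_pos)
      rw [mem_nhdsWithin] at h2
      obtain ⟨U, hUo, htU, hU⟩ := h2
      refine ⟨U, hUo.mem_nhds htU, |φ t| + 1, fun x hx => ?_⟩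
      have hd := hU ⟨hx.1, hx.2⟩
      simp only [mem_preimage, Metric.mem_ball, Real.dist_eq] at hd
      have h3 := abs_sub_abs_le_abs_sub (φ x) (φ t)
      linarith
    · rw [mem_closure_iff] at hrd
      push_neg at hrd
      obtain ⟨U, hUo, htU, hU⟩ := hrd
      by_cases hld : t ∈ closure (D ∩ Set.Iio t)
      · obtain ⟨L, hL⟩ := hφ.2 t ⟨ht, ht⟩ hld
        have h2 : φ ⁻¹' Metric.ball L 1 ∈ 𝓝[D ∩ Set.Iio t] t :=
          hL (Metric.ball_mem_nhds _ one_pos)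
        rw [mem_nhdsWithin] at h2
        obtain ⟨W, hWo, htW, hW⟩ := h2
        refine ⟨U ∩ W, (hUo.inter hWo).mem_nhds ⟨htU, htW⟩, max (|φ t|) (|L| + 1),
          fun x hx => ?_⟩
        rcases lt_trichotomy x t with hxt | hxt | hxt
        · have hd := hW ⟨hx.1.2, hx.2, hxt⟩
          simp only [mem_preimage, Metric.mem_ball, Real.dist_eq] at hd
          refine le_trans ?_ (le_max_right _ _)
          have h3 := abs_sub_abs_le_abs_sub (φ x) L
          linarith
        · subst hxt; exact le_max_left _ _
        · exfalso
          have : x ∈ U ∩ (D ∩ Set.Ioi t) := ⟨hx.1.1, hx.2, hxt⟩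
          rw [hU] at this
          exact this
      · rw [mem_closure_iff] at hld
        push_neg at hld
        obtain ⟨W, hWo, htW, hW⟩ := hld
        refine ⟨U ∩ W, (hUo.inter hWo).mem_nhds ⟨htU, htW⟩, |φ t|, fun x hx => ?_⟩
        rcases lt_trichotomy x t with hxt | hxt | hxt
        · exfalso
          have : x ∈ W ∩ (D ∩ Set.Iio t) := ⟨hx.1.2, hx.2, hxt⟩
          rw [hW] at this
          exact this
        · subst hxt; exact le_rfl
        · exfalso
          have : x ∈ U ∩ (D ∩ Set.Ioi t) := ⟨hx.1.1, hx.2, hxt⟩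
          rw [hU] at this
          exact this
  choose V hV M hM using claim
  obtain ⟨fs, hcov⟩ := hDcp.elim_nhds_subcover' (fun t ht => V t ht) (fun t ht => hV t ht)
  by_cases hfs : fs.Nonempty
  · refine ⟨fs.sup' hfs (fun t => M t t.2), fun x hx => ?_⟩
    obtain ⟨t, hts, hxt⟩ := Set.mem_iUnion₂.1 (hcov hx)
    exact le_trans (hM t t.2 x ⟨hxt, hx⟩) (Finset.le_sup' (f := fun t : D => M t t.2) hts)
  · refine ⟨0, fun x hx => ?_⟩
    obtain ⟨t, hts, _⟩ := Set.mem_iUnion₂.1 (hcov hx)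
    exact absurd ⟨t, hts⟩ hfs

lemma g_mem {D : Set ℝ} (hDcp : IsCompact D) {l : ℝ} (hl : l ∈ D) :
    ∀ t, l ≤ t → sSup (D ∩ Set.Iic t) ∈ D ∩ Set.Iic t := fun t hlt =>
  (hDcp.isClosed.inter isClosed_Iic).csSup_mem ⟨l, hl, hlt⟩
    (hDcp.bddAbove.mono Set.inter_subset_left)

lemma g_mono {D : Set ℝ} (hDcp : IsCompact D) {l : ℝ} (hl : l ∈ D) :
    ∀ s t, l ≤ s → s ≤ t → sSup (D ∩ Set.Iic s) ≤ sSup (D ∩ Set.Iic t) :=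
  fun s t hls hst => csSup_le_csSup (hDcp.bddAbove.mono Set.inter_subset_left)
    ⟨l, hl, hls⟩ (Set.inter_subset_inter_right _ (Set.Iic_subset_Iic.2 hst))

/-- right-continuity of `t ↦ sSup (D ∩ Iic t)`. -/
lemma g_right_cont {D : Set ℝ} (hDcp : IsCompact D) {l : ℝ} (hl : l ∈ D) :
    ∀ t, l ≤ t →
    Tendsto (fun s => sSup (D ∩ Set.Iic s)) (𝓝[Set.Ici t] t) (𝓝 (sSup (D ∩ Set.Iic t))) := by
  intro t hlt
  have hgt := g_mem hDcp hl t hlt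
  have hle : sSup (D ∩ Set.Iic t) ≤ t := hgt.2
  rcases eq_or_lt_of_le hle with hc | hc
  · -- sSup (D ∩ Iic t) = t : squeeze
    have h1 : ∀ s ∈ Set.Ici t, sSup (D ∩ Set.Iic t) ≤ sSup (D ∩ Set.Iic s) :=
      fun s hs => g_mono hDcp hl t s hlt hs
    have h2 : ∀ s ∈ Set.Ici t, sSup (D ∩ Set.Iic s) ≤ s := fun s hs =>
      (g_mem hDcp hl s (le_trans hlt hs)).2
    have hid : Tendsto (fun s : ℝ => s) (𝓝[Set.Ici t] t) (𝓝 (sSup (D ∩ Set.Iic t))) := by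
      rw [hc]
      have hid0 : Tendsto (fun s : ℝ => s) (𝓝 t) (𝓝 t) := tendsto_id
      exact hid0.mono_left nhdsWithin_le_nhds
    exact tendsto_of_tendsto_of_tendsto_of_le_of_le' tendsto_const_nhds hid
      (eventually_nhdsWithin_of_forall h1) (eventually_nhdsWithin_of_forall h2)
  · -- sSup (D ∩ Iic t) < t : locally constant to the right
    have hnot : ∃ δ > 0, ∀ x ∈ D, ¬ (t < x ∧ x < t + δ) := by
      by_contra hcon
      push_neg at hcon
      have htD : t ∈ closure D := by
        rw [Metric.mem_closure_iff]
        intro ε hε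
        obtain ⟨x, hxD, hx1, hx2⟩ := hcon ε hε
        exact ⟨x, hxD, by rw [Real.dist_eq, abs_lt]; constructor <;> linarith⟩
      rw [hDcp.isClosed.closure_eq] at htD
      have : t ≤ sSup (D ∩ Set.Iic t) :=
        le_csSup (hDcp.bddAbove.mono Set.inter_subset_left) ⟨htD, Set.mem_Iic.2 le_rfl⟩
      linarith
    obtain ⟨δ, hδ, hnoD⟩ := hnot
    have hconst : ∀ s ∈ Set.Ico t (t + δ), sSup (D ∩ Set.Iic s) = sSup (D ∩ Set.Iic t) := by
      intro s hs
      apply le_antisymm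
      · have hne : (D ∩ Set.Iic s).Nonempty := ⟨l, hl, Set.mem_Iic.2 (le_trans hlt hs.1)⟩
        apply csSup_le hne
        intro x hx
        apply le_csSup (hDcp.bddAbove.mono Set.inter_subset_left)
        refine ⟨hx.1, Set.mem_Iic.2 ?_⟩
        by_contra hxt
        push_neg at hxt
        have hx2 : x ≤ s := Set.mem_Iic.1 hx.2
        exact hnoD x hx.1 ⟨hxt, lt_of_le_of_lt hx2 hs.2⟩
      · exact g_mono hDcp hl t s hlt hs.1
    have hmem : Set.Ico t (t + δ) ∈ 𝓝[Set.Ici t] t :=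
      Ico_mem_nhdsGE (by linarith)
    refine Tendsto.congr' ?_ (tendsto_const_nhds (α := ℝ))
    exact eventually_of_mem hmem fun s hs => (hconst s hs).symm

/-- Right-continuity of `φ ∘ g` for rd-continuous `φ`. -/
lemma comp_right_cont {D : Set ℝ} (hDcp : IsCompact D) {l : ℝ} (hl : l ∈ D)
    {φ : ℝ → ℝ} (hφ : RdContinuousOn D φ D) : ∀ t, l ≤ t →
    Tendsto (fun s => φ (sSup (D ∩ Set.Iic s))) (𝓝[Set.Ici t] t)
      (𝓝 (φ (sSup (D ∩ Set.Iic t)))) := by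
  intro t hlt
  by_cases hconst : ∃ δ > 0, ∀ s ∈ Set.Ico t (t + δ),
      sSup (D ∩ Set.Iic s) = sSup (D ∩ Set.Iic t)
  · obtain ⟨δ, hδ, hcn⟩ := hconst
    have hmem : Set.Ico t (t + δ) ∈ 𝓝[Set.Ici t] t :=
      Ico_mem_nhdsGE (by linarith)
    refine Tendsto.congr' ?_ (tendsto_const_nhds (α := ℝ))
    exact eventually_of_mem hmem fun s hs => by
      show φ (sSup (D ∩ Set.Iic t)) = φ (sSup (D ∩ Set.Iic s))
      rw [hcn s hs]
  · -- sSup (D ∩ Iic t) is right-dense in D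
    push_neg at hconst
    set c : ℝ := sSup (D ∩ Set.Iic t) with hcdef
    have hcD : c ∈ D := (g_mem hDcp hl t hlt).1
    have hrd : c ∈ closure (D ∩ Set.Ioi c) := by
      rw [Metric.mem_closure_iff]
      intro ε hε
      have hg := g_right_cont hDcp hl t hlt
      have hev : ∀ᶠ s in 𝓝[Set.Ici t] t, sSup (D ∩ Set.Iic s) < c + ε :=
        hg.eventually_lt_const (by linarith)
      rw [eventually_nhdsWithin_iff] at hev
      obtain ⟨δ₀, hδ₀, hball⟩ := Metric.eventually_nhds_iff.1 hev
      obtain ⟨s, hs, hsne⟩ := hconst (min δ₀ 1) (by positivity)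
      have hslt : sSup (D ∩ Set.Iic s) < c + ε := by
        apply hball (y := s) _ hs.1
        rw [Real.dist_eq, abs_lt]
        have h1 : s < t + min δ₀ 1 := hs.2
        have h2 : min δ₀ 1 ≤ δ₀ := min_le_left _ _
        constructor <;> [linarith [hs.1]; linarith]
      have hsgc : c < sSup (D ∩ Set.Iic s) :=
        lt_of_le_of_ne (g_mono hDcp hl t s hlt hs.1) (Ne.symm hsne)
      refine ⟨sSup (D ∩ Set.Iic s), ⟨(g_mem hDcp hl s (le_trans hlt hs.1)).1, hsgc⟩, ?_⟩
      rw [Real.dist_eq, abs_lt]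
      constructor <;> linarith
    have hcont : ContinuousWithinAt φ D c := hφ.1 c ⟨hcD, hcD⟩ hrd
    have hgD : Tendsto (fun s => sSup (D ∩ Set.Iic s)) (𝓝[Set.Ici t] t) (𝓝[D] c) := by
      rw [tendsto_nhdsWithin_iff]
      refine ⟨g_right_cont hDcp hl t hlt, ?_⟩
      exact eventually_nhdsWithin_of_forall fun s hs => (g_mem hDcp hl s (le_trans hlt hs)).1
    exact hcont.tendsto.comp hgD

/-- The clamped sup function. -/
noncomputable def Gfun (D : Set ℝ) (l u : ℝ) : ℝ → ℝ :=
  fun t => sSup (D ∩ Set.Iic (l ⊔ (u ⊓ t)))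

lemma clamp_mono {l u : ℝ} : Monotone (fun t : ℝ => l ⊔ (u ⊓ t)) := fun s t hst =>
  sup_le_sup_left (inf_le_inf_left u hst) l

lemma clamp_eq_self {l u t : ℝ} (h1 : l ≤ t) (h2 : t ≤ u) : l ⊔ (u ⊓ t) = t := by
  rw [inf_eq_right.2 h2, sup_eq_right.2 h1]

lemma Gfun_mem {D : Set ℝ} (hDcp : IsCompact D) {l : ℝ} (hl : l ∈ D) (u : ℝ) :
    ∀ t, Gfun D l u t ∈ D := fun t =>
  (g_mem hDcp hl (l ⊔ (u ⊓ t)) le_sup_left).1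

lemma Gfun_right_cont {D : Set ℝ} (hDcp : IsCompact D) {l : ℝ} (hl : l ∈ D) (u : ℝ)
    {φ : ℝ → ℝ} (hφ : RdContinuousOn D φ D) (t : ℝ) :
    Tendsto (fun s => φ (Gfun D l u s)) (𝓝[Set.Ici t] t) (𝓝 (φ (Gfun D l u t))) := by
  have hclcont : Continuous (fun s : ℝ => l ⊔ (u ⊓ s)) :=
    Continuous.max continuous_const (Continuous.min continuous_const continuous_id)
  have h1 : Tendsto (fun s : ℝ => l ⊔ (u ⊓ s)) (𝓝[Set.Ici t] t)
      (𝓝[Set.Ici (l ⊔ (u ⊓ t))] (l ⊔ (u ⊓ t))) := by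
    rw [tendsto_nhdsWithin_iff]
    refine ⟨(hclcont.tendsto t).mono_left nhdsWithin_le_nhds, ?_⟩
    exact eventually_nhdsWithin_of_forall fun s hs => clamp_mono hs
  exact (comp_right_cont hDcp hl hφ (l ⊔ (u ⊓ t)) le_sup_left).comp h1

lemma Gfun_measurable {D : Set ℝ} (hDcp : IsCompact D) {l : ℝ} (hl : l ∈ D) (u : ℝ)
    {φ : ℝ → ℝ} (hφ : RdContinuousOn D φ D) :
    Measurable (fun t => φ (Gfun D l u t)) := by
  set h : ℝ → ℝ := fun t => φ (Gfun D l u t) with hh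
  have happrox : ∀ n : ℕ, Measurable (fun t : ℝ => h ((⌈(2 ^ n : ℝ) * t⌉ : ℝ) / 2 ^ n)) := by
    intro n
    exact (measurable_of_countable (fun k : ℤ => h ((k : ℝ) / 2 ^ n))).comp
      (Int.measurable_ceil.comp (measurable_const.mul measurable_id))
  apply measurable_of_tendsto_metrizable happrox
  rw [tendsto_pi_nhds]
  intro t
  have hc : Tendsto (fun n : ℕ => (⌈(2 ^ n : ℝ) * t⌉ : ℝ) / 2 ^ n) atTop (𝓝[Set.Ici t] t) := by
    rw [tendsto_nhdsWithin_iff]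
    constructor
    · have htop : Tendsto (fun n : ℕ => t + ((1:ℝ) / 2) ^ n) atTop (𝓝 t) := by
        have h0 : Tendsto (fun n : ℕ => ((1:ℝ) / 2) ^ n) atTop (𝓝 0) :=
          tendsto_pow_atTop_nhds_zero_of_lt_one (by norm_num) (by norm_num)
        simpa using tendsto_const_nhds.add h0
      apply tendsto_of_tendsto_of_tendsto_of_le_of_le' (tendsto_const_nhds (x := t)) htop
      · filter_upwards with n
        rw [le_div_iff₀ (by positivity), mul_comm]
        exact Int.le_ceil _
      · filter_upwards with n
        rw [div_le_iff₀ (by positivity)]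
        have h1 : (⌈(2 ^ n : ℝ) * t⌉ : ℝ) < 2 ^ n * t + 1 := Int.ceil_lt_add_one _
        have h2 : ((1:ℝ) / 2) ^ n * 2 ^ n = 1 := by
          rw [div_pow, one_pow, div_mul_eq_mul_div, div_eq_one_iff_eq (by positivity), one_mul]
        nlinarith [h1]
    · filter_upwards with n
      rw [Set.mem_Ici, le_div_iff₀ (by positivity), mul_comm]
      exact Int.le_ceil _
  exact (Gfun_right_cont hDcp hl u hφ t).comp hc

lemma Gfun_intervalIntegrable {D : Set ℝ} (hDcp : IsCompact D) {l : ℝ} (hl : l ∈ D) (u : ℝ)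
    {φ : ℝ → ℝ} (hφ : RdContinuousOn D φ D) (a b : ℝ) :
    IntervalIntegrable (fun t => φ (Gfun D l u t)) volume a b := by
  obtain ⟨M, hM⟩ := rd_bounded hDcp hφ
  rw [intervalIntegrable_iff]
  apply MeasureTheory.Integrable.mono' (g := fun _ => M)
  · exact integrableOn_const measure_Ioc_lt_top.ne
  · exact ((Gfun_measurable hDcp hl u hφ).aestronglyMeasurable).restrict
  · filter_upwards with t
    exact hM _ (Gfun_mem hDcp hl u t)

/-- If `D` is a compact time scale, each `F n` is rd-continuous on `D` and `F n → f`
uniformly on `D`, then `f` is rd-continuous on `D` and the delta integrals of `F n`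
over `[a,b]` converge to the delta integral of `f` over `[a,b]`, for `a, b ∈ D`. -/
theorem rdContinuous_limit_and_delta_integral_limit
    (D : Set ℝ) (hDne : D.Nonempty) (hDcp : IsCompact D)
    (F : ℕ → ℝ → ℝ) (f : ℝ → ℝ)
    (hF : ∀ n, RdContinuousOn D (F n) D)
    (hconv : TendstoUniformlyOn F f atTop D)
    (a b : ℝ) (ha : a ∈ D) (hb : b ∈ D) :
    RdContinuousOn D f D ∧
      Tendsto (fun n => deltaInt D a b (F n)) atTop (nhds (deltaInt D a b f)) := by
  -- Part 1: f is rd-continuous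
  have hrdf : RdContinuousOn D f D := by
    constructor
    · intro t ht hrd
      apply continuousWithinAt_of_locally_uniform_approx_of_continuousWithinAt ht.2
      intro v hv
      obtain ⟨ε, hε, hεv⟩ := Metric.mem_uniformity_dist.1 hv
      obtain ⟨n, hn⟩ := (Metric.tendstoUniformlyOn_iff.1 hconv ε hε).exists
      exact ⟨D, self_mem_nhdsWithin, F n, (hF n).1 t ht hrd,
        fun y hy => hεv (hn y hy)⟩
    · intro t ht hld
      have hne : (𝓝[D ∩ Set.Iio t] t).NeBot := mem_closure_iff_nhdsWithin_neBot.1 hld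
      rw [← cauchy_map_iff_exists_tendsto]
      rw [Metric.cauchy_iff]
      refine ⟨map_neBot, fun ε hε => ?_⟩
      obtain ⟨n, hn⟩ := (Metric.tendstoUniformlyOn_iff.1 hconv (ε / 4) (by linarith)).exists
      obtain ⟨L, hL⟩ := (hF n).2 t ht hld
      have hS : (F n) ⁻¹' Metric.ball L (ε / 4) ∈ 𝓝[D ∩ Set.Iio t] t :=
        hL (Metric.ball_mem_nhds _ (by linarith))
      refine ⟨f '' ((F n ⁻¹' Metric.ball L (ε / 4)) ∩ (D ∩ Set.Iio t)),
        image_mem_map (inter_mem hS self_mem_nhdsWithin), ?_⟩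
      rintro _ ⟨x, ⟨hx1, hx2⟩, rfl⟩ _ ⟨y, ⟨hy1, hy2⟩, rfl⟩
      have hfx : dist (f x) (F n x) < ε / 4 := hn x hx2.1
      have hfy : dist (f y) (F n y) < ε / 4 := hn y hy2.1
      simp only [Set.mem_preimage, Metric.mem_ball] at hx1 hy1
      have h1 : dist (f x) (f y) ≤ dist (f x) (F n x) + dist (F n x) (F n y)
          + dist (F n y) (f y) := dist_triangle4 _ _ _ _
      have h2 : dist (F n x) (F n y) ≤ dist (F n x) L + dist L (F n y) := dist_triangle _ _ _
      have h3 : dist (F n y) (f y) = dist (f y) (F n y) := dist_comm _ _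
      have h4 : dist L (F n y) = dist (F n y) L := dist_comm _ _
      linarith
  refine ⟨hrdf, ?_⟩
  -- Part 2: convergence of delta integrals
  set l : ℝ := a ⊓ b with hldef
  set u : ℝ := a ⊔ b with hudef
  have hl : l ∈ D := by rcases min_choice a b with h | h <;> rw [hldef, h] <;> assumption
  have hu : u ∈ D := by rcases max_choice a b with h | h <;> rw [hudef, h] <;> assumption
  have heq : ∀ φ : ℝ → ℝ, deltaInt D a b φ = ∫ t in a..b, φ (Gfun D l u t) := by
    intro φ
    apply intervalIntegral.integral_congr
    intro t ht
    rw [Set.uIcc_eq_union] at ht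
    have h1 : l ≤ t := by
      rcases ht with h | h
      · exact le_trans inf_le_left h.1
      · exact le_trans inf_le_right h.1
    have h2 : t ≤ u := by
      rcases ht with h | h
      · exact le_trans h.2 le_sup_right
      · exact le_trans h.2 le_sup_left
    simp only [Gfun, clamp_eq_self h1 h2]
  rw [heq f]
  have heqn : (fun n => deltaInt D a b (F n)) = fun n => ∫ t in a..b, F n (Gfun D l u t) := by
    funext n; exact heq (F n)
  rw [heqn]
  rw [Metric.tendsto_atTop]
  intro ε hε
  have hε' : 0 < ε / (|b - a| + 1) := by positivity
  obtain ⟨N, hN⟩ := ((Metric.tendstoUniformlyOn_iff.1 hconv (ε / (|b - a| + 1))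
    hε').exists_forall_of_atTop)
  refine ⟨N, fun n hn => ?_⟩
  have hint1 := Gfun_intervalIntegrable hDcp hl u (hF n) a b
  have hint2 := Gfun_intervalIntegrable hDcp hl u hrdf a b
  rw [Real.dist_eq, ← intervalIntegral.integral_sub hint1 hint2]
  have hbound : ∀ x ∈ Set.uIoc a b,
      ‖F n (Gfun D l u x) - f (Gfun D l u x)‖ ≤ ε / (|b - a| + 1) := by
    intro x _
    have hd := hN n hn (Gfun D l u x) (Gfun_mem hDcp hl u x)
    rw [Real.dist_eq, abs_sub_comm] at hd
    exact le_of_lt hd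
  calc |∫ t in a..b, (F n (Gfun D l u t) - f (Gfun D l u t))|
      ≤ ε / (|b - a| + 1) * |b - a| :=
        intervalIntegral.norm_integral_le_of_norm_le_const hbound
    _ < ε := by
        rw [div_mul_eq_mul_div, div_lt_iff₀ (by positivity)]
        nlinarith [abs_nonneg (b - a)]
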